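/- arXiv:2204.08631 — 4 statements merged into one kernel-verified Lean document; each statement's English description precedes it below -/
import Mathlib

section
/- Let G be a graph such that both G and all its induced subgraphs have the property that for every vertex v, the set of non-neighbors of v induces a bipartite graph. Let m, q be positive integers. If every induced subgraph of G with clique number at most m is q-colorable, then every induced subgraph of G with clique number at most m+1 is (q+2)-colorable. In particular, if ω(G) ≤ m+1 and every induced subgraph of G with clique number at most m admits a proper q-coloring, then G admits a proper (q+2)-coloring. -/
open SimpleGraph

/-- If in every induced subgraph of `G` the non-neighborhood of every vertex induces a
bipartite graph, and every induced subgraph of `G` with clique number at most `m` is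
`q`-colorable, then every induced subgraph of `G` with clique number at most `m+1`
(in particular `G` itself when `ω(G) ≤ m+1`) is `(q+2)`-colorable. -/
theorem stmt4 {V : Type*} (G : SimpleGraph V) (m q : ℕ) (hm : 0 < m) (hq : 0 < q)
    (hbip : ∀ (s : Set V) (v : s),
      (((G.induce s).induce {w : s | w ≠ v ∧ ¬ (G.induce s).Adj v w})).Colorable 2)
    (hcol : ∀ s : Set V, (G.induce s).CliqueFree (m + 1) → (G.induce s).Colorable q) :
    ∀ s : Set V, (G.induce s).CliqueFree (m + 2) → (G.induce s).Colorable (q + 2) := by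
  classical
  intro s hfree
  by_cases hs : Nonempty s
  · obtain ⟨v⟩ := hs
    set A : Set V := {w | w ∈ s ∧ G.Adj ↑v w} with hA
    have hAfree : (G.induce A).CliqueFree (m + 1) := by
      intro t ht
      -- map the clique into s and insert v
      let f : A → s := fun w => ⟨w.1, w.2.1⟩
      have hfinj : Function.Injective f := by intro a b hab; simp only [f, Subtype.mk.injEq] at hab; exact Subtype.ext hab
      have himg : (G.induce s).IsNClique (m + 1) (t.image f) := by
        constructor
        · intro x hx y hy hxy
          simp only [Finset.coe_image, Set.mem_image, Finset.mem_coe] at hx hy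
          obtain ⟨a, ha, rfl⟩ := hx
          obtain ⟨b, hb, rfl⟩ := hy
          have hab : a ≠ b := fun h => hxy (by rw [h])
          exact ht.1 ha hb hab
        · rw [Finset.card_image_of_injective _ hfinj, ht.2]
      have hv : ∀ b ∈ t.image f, (G.induce s).Adj v b := by
        intro b hb
        simp only [Finset.mem_image] at hb
        obtain ⟨a, ha, rfl⟩ := hb
        exact a.2.2
      have := himg.insert hv
      exact hfree _ this
    obtain ⟨cA⟩ := hcol A hAfree
    obtain ⟨cB⟩ := hbip s v
    refine ⟨SimpleGraph.Coloring.mk (fun x =>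
      if hx : G.Adj ↑v ↑x then Fin.castLE (by omega) (cA ⟨↑x, x.2, hx⟩)
      else if hxv : x = v then ⟨q, by omega⟩
      else ⟨q + (cB ⟨x, hxv, hx⟩ : ℕ), by have := (cB ⟨x, hxv, hx⟩).2; omega⟩) ?_⟩
    intro x y hadj
    have hxy : G.Adj ↑x ↑y := hadj
    by_cases hx : G.Adj ↑v ↑x <;> by_cases hy : G.Adj ↑v ↑y
    · simp only [dif_pos hx, dif_pos hy]
      intro h
      have h' := Fin.castLE_injective (by omega : q ≤ q + 2) h
      have hadjA : (G.induce A).Adj ⟨↑x, x.2, hx⟩ ⟨↑y, y.2, hy⟩ := hxy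
      exact cA.valid hadjA h'
    · simp only [dif_pos hx, dif_neg hy]
      intro h
      have h1 : ((Fin.castLE (by omega : q ≤ q + 2) (cA ⟨↑x, x.2, hx⟩)) : ℕ) < q :=
        (cA ⟨↑x, x.2, hx⟩).2
      split at h <;> · rw [Fin.ext_iff] at h; simp at h; omega
    · simp only [dif_neg hx, dif_pos hy]
      intro h
      have h1 : ((Fin.castLE (by omega : q ≤ q + 2) (cA ⟨↑y, y.2, hy⟩)) : ℕ) < q :=
        (cA ⟨↑y, y.2, hy⟩).2
      split at h <;> · rw [Fin.ext_iff] at h; simp at h; omega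
    · have hxv : x ≠ v := fun h => hy (by rw [← h]; exact hxy)
      have hyv : y ≠ v := fun h => hx (by rw [← h]; exact hxy.symm)
      simp only [dif_neg hx, dif_neg hy, dif_neg hxv, dif_neg hyv]
      intro h
      rw [Fin.ext_iff] at h
      simp only at h
      have hne : cB ⟨x, hxv, hx⟩ ≠ cB ⟨y, hyv, hy⟩ := by
        have hadjB : (((G.induce s).induce {w : s | w ≠ v ∧ ¬ (G.induce s).Adj v w})).Adj
            ⟨x, hxv, hx⟩ ⟨y, hyv, hy⟩ := hxy
        exact cB.valid hadjB
      exact hne (Fin.ext (by omega))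
  · have : IsEmpty ↑s := not_nonempty_iff.mp hs
    exact Colorable.of_isEmpty _
end

section
/- Let G be a (C_5, 2K_2)-free graph and let S_1, S_2, S_3 be sets of vertices outside a triangle {r_1, r_2, r_3}, where each vertex of S_j is adjacent (within the triangle) exactly to r_j. Assume additionally that G has no induced complement of C_6. If all three sets S_1, S_2, S_3 are nonempty, then S_1 ∪ S_2 ∪ S_3 is a stable set. -/
open SimpleGraph

/-- `2K_2`: disjoint union of two edges. -/
def twoK2 : SimpleGraph (Fin 4) :=
  SimpleGraph.fromEdgeSet {s(0, 1), s(2, 3)}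

set_option maxRecDepth 10000

@[simp] lemma stmt16_cons_val_five {α : Type*} (a b c d e f : α) : ![a,b,c,d,e,f] 5 = f := rfl

def stmt16_embOf {V : Type*} {n : ℕ} (G : SimpleGraph V) (H : SimpleGraph (Fin n)) (f : Fin n → V)
    (hinj : Function.Injective f) (h : ∀ i j, G.Adj (f i) (f j) ↔ H.Adj i j) : H ↪g G :=
  ⟨⟨f, hinj⟩, h _ _⟩

lemma stmt16_inj4 {V : Type*} {a b c d : V} (h1 : a≠b) (h2 : a≠c) (h3 : a≠d) (h4 : b≠c)
    (h5 : b≠d) (h6 : c≠d) : Function.Injective ![a,b,c,d] := by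
  intro i j hij; fin_cases i <;> fin_cases j <;> simp_all

lemma stmt16_inj5 {V : Type*} {a b c d e : V} (h1 : a≠b) (h2 : a≠c) (h3 : a≠d) (h4 : a≠e)
    (h5 : b≠c) (h6 : b≠d) (h7 : b≠e) (h8 : c≠d) (h9 : c≠e) (h10 : d≠e) :
    Function.Injective ![a,b,c,d,e] := by
  intro i j hij; fin_cases i <;> fin_cases j <;> simp_all

lemma stmt16_inj6 {V : Type*} {a b c d e f : V} (h1 : a≠b) (h2 : a≠c) (h3 : a≠d) (h4 : a≠e)
    (h5 : a≠f) (h6 : b≠c) (h7 : b≠d) (h8 : b≠e) (h9 : b≠f) (h10 : c≠d) (h11 : c≠e) (h12 : c≠f)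
    (h13 : d≠e) (h14 : d≠f) (h15 : e≠f) :
    Function.Injective ![a,b,c,d,e,f] := by
  intro i j hij; fin_cases i <;> fin_cases j <;> simp_all

/-- From four vertices forming an induced `2K_2` (edges `a-b`, `c-d`), contradiction. -/
lemma stmt16_no2K2 {V : Type*} {G : SimpleGraph V} (h2K2 : IsEmpty (twoK2 ↪g G)) {a b c d : V}
    (h2 : a≠c) (h3 : a≠d) (h4 : b≠c) (h5 : b≠d)
    (e1 : G.Adj a b) (e2 : G.Adj c d) (n1 : ¬G.Adj a c) (n2 : ¬G.Adj a d)
    (n3 : ¬G.Adj b c) (n4 : ¬G.Adj b d) : False := by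
  refine h2K2.elim (stmt16_embOf G _ ![a,b,c,d] (stmt16_inj4 e1.ne h2 h3 h4 h5 e2.ne) ?_)
  intro i j
  fin_cases i <;> fin_cases j <;>
    simp_all [twoK2, G.adj_comm, e1.symm, e2.symm]

/-- From an induced 5-cycle `a-b-c-d-e-a`, contradiction. -/
lemma stmt16_noC5 {V : Type*} {G : SimpleGraph V}
    (hC5 : IsEmpty (SimpleGraph.cycleGraph 5 ↪g G)) {a b c d e : V}
    (h2 : a≠c) (h3 : a≠d) (h6 : b≠d) (h7 : b≠e) (h9 : c≠e)
    (e1 : G.Adj a b) (e2 : G.Adj b c) (e3 : G.Adj c d) (e4 : G.Adj d e) (e5 : G.Adj e a)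
    (n1 : ¬G.Adj a c) (n2 : ¬G.Adj a d) (n3 : ¬G.Adj b d) (n4 : ¬G.Adj b e)
    (n5 : ¬G.Adj c e) : False := by
  have n1' : ¬G.Adj c a := fun h => n1 h.symm
  have n2' : ¬G.Adj d a := fun h => n2 h.symm
  have n3' : ¬G.Adj d b := fun h => n3 h.symm
  have n4' : ¬G.Adj e b := fun h => n4 h.symm
  have n5' : ¬G.Adj e c := fun h => n5 h.symm
  refine hC5.elim (stmt16_embOf G _ ![a,b,c,d,e]
    (stmt16_inj5 e1.ne h2 h3 (fun h => e5.ne h.symm) e2.ne h6 h7 e3.ne h9 e4.ne) ?_)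
  intro i j
  fin_cases i <;> fin_cases j <;>
    simp_all [cycleGraph_adj, e1.symm, e2.symm, e3.symm, e4.symm, e5.symm] <;> decide

/-- From six vertices inducing the complement of `C_6` (non-edge cycle `a-b-c-d-e-f-a`),
contradiction. -/
lemma stmt16_noC6bar {V : Type*} {G : SimpleGraph V}
    (hC6bar : IsEmpty ((SimpleGraph.cycleGraph 6)ᶜ ↪g G)) {a b c d e f : V}
    (h1 : a≠b) (h6 : b≠c) (h10 : c≠d) (h13 : d≠e) (h15 : e≠f) (h5 : a≠f)
    (n1 : ¬G.Adj a b) (n2 : ¬G.Adj b c) (n3 : ¬G.Adj c d) (n4 : ¬G.Adj d e) (n5 : ¬G.Adj e f)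
    (n6 : ¬G.Adj f a)
    (e1 : G.Adj a c) (e2 : G.Adj a d) (e3 : G.Adj a e) (e4 : G.Adj b d) (e5 : G.Adj b e)
    (e6 : G.Adj b f) (e7 : G.Adj c e) (e8 : G.Adj c f) (e9 : G.Adj d f) : False := by
  have n1' : ¬G.Adj b a := fun h => n1 h.symm
  have n2' : ¬G.Adj c b := fun h => n2 h.symm
  have n3' : ¬G.Adj d c := fun h => n3 h.symm
  have n4' : ¬G.Adj e d := fun h => n4 h.symm
  have n5' : ¬G.Adj f e := fun h => n5 h.symm
  have n6' : ¬G.Adj a f := fun h => n6 h.symm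
  refine hC6bar.elim (stmt16_embOf G _ ![a,b,c,d,e,f]
    (stmt16_inj6 h1 e1.ne e2.ne e3.ne h5 h6 e4.ne e5.ne e6.ne h10 e7.ne e8.ne h13 e9.ne h15) ?_)
  intro i j
  fin_cases i <;> fin_cases j <;>
    simp_all [compl_adj, cycleGraph_adj, e1.symm, e2.symm, e3.symm, e4.symm, e5.symm,
      e6.symm, e7.symm, e8.symm, e9.symm] <;> decide

/-- The cross-set case: `x ∈ S i`, `y ∈ S j` with `i ≠ j` cannot be adjacent. -/
lemma stmt16_key {V : Type*} {G : SimpleGraph V}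
    (hC5 : IsEmpty (SimpleGraph.cycleGraph 5 ↪g G))
    (h2K2 : IsEmpty (twoK2 ↪g G))
    (hC6bar : IsEmpty ((SimpleGraph.cycleGraph 6)ᶜ ↪g G))
    {r : Fin 3 → V} (htri : ∀ i j : Fin 3, i ≠ j → G.Adj (r i) (r j))
    {S : Fin 3 → Set V}
    (hout : ∀ j : Fin 3, ∀ x ∈ S j, ∀ k : Fin 3, x ≠ r k)
    (hS : ∀ j : Fin 3, ∀ x ∈ S j, ∀ k : Fin 3, G.Adj x (r k) ↔ k = j)
    {i j k : Fin 3} (hij : i ≠ j) (hjk : j ≠ k) (hik : i ≠ k)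
    {x y z : V} (hx : x ∈ S i) (hy : y ∈ S j) (hz : z ∈ S k)
    (hxy : G.Adj x y) : False := by
  have hxri : G.Adj x (r i) := (hS i x hx i).mpr rfl
  have hnxrj : ¬G.Adj x (r j) := fun h => hij.symm ((hS i x hx j).mp h)
  have hnxrk : ¬G.Adj x (r k) := fun h => hik.symm ((hS i x hx k).mp h)
  have hyrj : G.Adj y (r j) := (hS j y hy j).mpr rfl
  have hnyri : ¬G.Adj y (r i) := fun h => hij ((hS j y hy i).mp h)
  have hnyrk : ¬G.Adj y (r k) := fun h => hjk.symm ((hS j y hy k).mp h)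
  have hzrk : G.Adj z (r k) := (hS k z hz k).mpr rfl
  have hnzri : ¬G.Adj z (r i) := fun h => hik ((hS k z hz i).mp h)
  have hnzrj : ¬G.Adj z (r j) := fun h => hjk ((hS k z hz j).mp h)
  have hxz : x ≠ z := fun h => hnxrk (h ▸ hzrk)
  have hyz : y ≠ z := fun h => hnyrk (h ▸ hzrk)
  by_cases hzx : G.Adj z x <;> by_cases hzy : G.Adj z y
  · -- z adjacent to both: complement of C6 on x, r j, z, r i, y, r k
    exact stmt16_noC6bar hC6bar (hout i x hx j) (Ne.symm (hout k z hz j)) (hout k z hz i)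
      (Ne.symm (hout j y hy i)) (hout j y hy k) (hout i x hx k)
      hnxrj (fun h => hnzrj h.symm) hnzri (fun h => hnyri h.symm) hnyrk
      (fun h => hnxrk h.symm)
      hzx.symm hxri hxy (htri j i hij.symm) hyrj.symm (htri j k hjk)
      hzy hzrk (htri i k hik)
  · -- z adjacent only to x: C5 on y, x, z, r k, r j
    exact stmt16_noC5 hC5 hyz (hout j y hy k) (hout i x hx k) (hout i x hx j)
      (hout k z hz j)
      hxy.symm hzx.symm hzrk (htri k j hjk.symm) hyrj.symm
      (fun h => hzy h.symm) hnyrk hnxrk hnxrj hnzrj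
  · -- z adjacent only to y: C5 on x, y, z, r k, r i
    exact stmt16_noC5 hC5 hxz (hout i x hx k) (hout j y hy k) (hout j y hy i)
      (hout k z hz i)
      hxy hzy.symm hzrk (htri k i hik.symm) hxri.symm
      (fun h => hzx h.symm) hnxrk hnyrk hnyri hnzri
  · -- z adjacent to neither: 2K2 on x-y, (r k)-z
    exact stmt16_no2K2 h2K2 (hout i x hx k) hxz (hout j y hy k) hyz
      hxy hzrk.symm hnxrk (fun h => hzx h.symm) hnyrk (fun h => hzy h.symm)

/-- Let `G` be (C_5, 2K_2, complement-of-C_6)-free, `{r 0, r 1, r 2}` a triangle, and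
`S 0, S 1, S 2` sets of vertices outside the triangle, each vertex of `S j` being
adjacent within the triangle exactly to `r j`. If all three sets are nonempty, then
`S 0 ∪ S 1 ∪ S 2` is a stable set. -/
theorem stmt16 {V : Type*} (G : SimpleGraph V)
    (hC5 : IsEmpty (SimpleGraph.cycleGraph 5 ↪g G))
    (h2K2 : IsEmpty (twoK2 ↪g G))
    (hC6bar : IsEmpty ((SimpleGraph.cycleGraph 6)ᶜ ↪g G))
    (r : Fin 3 → V) (htri : ∀ i j : Fin 3, i ≠ j → G.Adj (r i) (r j))
    (S : Fin 3 → Set V)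
    (hout : ∀ j : Fin 3, ∀ x ∈ S j, ∀ k : Fin 3, x ≠ r k)
    (hS : ∀ j : Fin 3, ∀ x ∈ S j, ∀ k : Fin 3, G.Adj x (r k) ↔ k = j)
    (hne : ∀ j : Fin 3, (S j).Nonempty) :
    ∀ x ∈ S 0 ∪ S 1 ∪ S 2, ∀ y ∈ S 0 ∪ S 1 ∪ S 2, ¬ G.Adj x y := by
  intro x hx y hy hxy
  have hx' : ∃ i : Fin 3, x ∈ S i := by
    rcases hx with (h | h) | h
    exacts [⟨0, h⟩, ⟨1, h⟩, ⟨2, h⟩]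
  have hy' : ∃ j : Fin 3, y ∈ S j := by
    rcases hy with (h | h) | h
    exacts [⟨0, h⟩, ⟨1, h⟩, ⟨2, h⟩]
  obtain ⟨i, hxi⟩ := hx'
  obtain ⟨j, hyj⟩ := hy'
  by_cases hij : i = j
  · -- same set: 2K2 on x-y, r(i+1)-r(i+2)
    subst hij
    have hfin : (i+1) ≠ i ∧ (i+2) ≠ i ∧ (i+1) ≠ (i+2) :=
      (by decide : ∀ m : Fin 3, (m+1) ≠ m ∧ (m+2) ≠ m ∧ (m+1) ≠ (m+2)) i
    have hnxr1 : ¬G.Adj x (r (i+1)) := fun h => hfin.1 ((hS i x hxi (i+1)).mp h)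
    have hnxr2 : ¬G.Adj x (r (i+2)) := fun h => hfin.2.1 ((hS i x hxi (i+2)).mp h)
    have hnyr1 : ¬G.Adj y (r (i+1)) := fun h => hfin.1 ((hS i y hyj (i+1)).mp h)
    have hnyr2 : ¬G.Adj y (r (i+2)) := fun h => hfin.2.1 ((hS i y hyj (i+2)).mp h)
    exact stmt16_no2K2 h2K2 (hout i x hxi (i+1)) (hout i x hxi (i+2))
      (hout i y hyj (i+1)) (hout i y hyj (i+2))
      hxy (htri (i+1) (i+2) hfin.2.2) hnxr1 hnxr2 hnyr1 hnyr2
  · -- different sets: use a vertex of the third set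
    set k : Fin 3 := -(i+j) with hk
    have hfin : j ≠ k ∧ i ≠ k :=
      (by decide : ∀ m n : Fin 3, m ≠ n → n ≠ -(m+n) ∧ m ≠ -(m+n)) i j hij
    obtain ⟨z, hz⟩ := hne k
    exact stmt16_key hC5 h2K2 hC6bar htri hout hS hij hfin.1 hfin.2 hxi hyj hz hxy
end

section
/- For every n ≥ 1, the complement of the disjoint union of n copies of C_5 has clique number 2n and chromatic number 3n; hence there exist (P_5, kite)-free graphs G with χ(G) = ⌊3ω(G)/2⌋ for every even clique number. -/
open SimpleGraph

/-- The kite: a path 0-1-2-3 plus a vertex 4 adjacent to 0, 1, 2. -/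
def kite : SimpleGraph (Fin 5) :=
  SimpleGraph.fromEdgeSet {s(0, 1), s(1, 2), s(2, 3), s(4, 0), s(4, 1), s(4, 2)}

/-- `nC₅ n`: the disjoint union of `n` copies of the 5-cycle `C_5`. -/
def nC5 (n : ℕ) : SimpleGraph (Fin n × Fin 5) where
  Adj x y := x.1 = y.1 ∧ (SimpleGraph.cycleGraph 5).Adj x.2 y.2
  symm := ⟨fun x y h => ⟨h.1.symm, (SimpleGraph.cycleGraph 5).adj_symm h.2⟩⟩
  loopless := ⟨fun x h => (SimpleGraph.cycleGraph 5).loopless.irrefl x.2 h.2⟩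

set_option maxRecDepth 40000

instance pg5Dec : DecidableRel (SimpleGraph.pathGraph 5).Adj :=
  fun _ _ => decidable_of_iff _ (SimpleGraph.pathGraph_adj).symm

lemma kite_adj {u v : Fin 5} : kite.Adj u v ↔ (u ≠ v ∧
    (s(u,v) = s(0,1) ∨ s(u,v) = s(1,2) ∨ s(u,v) = s(2,3) ∨ s(u,v) = s(4,0) ∨
      s(u,v) = s(4,1) ∨ s(u,v) = s(4,2))) := by
  rw [kite, SimpleGraph.fromEdgeSet_adj]
  simp [Set.mem_insert_iff, and_comm]

instance kiteDec : DecidableRel kite.Adj := fun _ _ => decidable_of_iff _ kite_adj.symm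

lemma nC5_compl_adj {n : ℕ} {x y : Fin n × Fin 5} :
    (nC5 n)ᶜ.Adj x y ↔ x ≠ y ∧ ¬(x.1 = y.1 ∧ (SimpleGraph.cycleGraph 5).Adj x.2 y.2) :=
  Iff.rfl

lemma adj_ne_fst {n : ℕ} {x y : Fin n × Fin 5} (h : x.1 ≠ y.1) : (nC5 n)ᶜ.Adj x y :=
  ⟨fun he => h (congrArg Prod.fst he), fun hc => h hc.1⟩

lemma adj_same {n : ℕ} {k : Fin n} {a b : Fin 5} (hab : a ≠ b)
    (h : ¬(SimpleGraph.cycleGraph 5).Adj a b) : (nC5 n)ᶜ.Adj (k, a) (k, b) :=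
  ⟨fun he => hab (congrArg Prod.snd he), fun hc => h hc.2⟩

/-- generic no-embedding lemma: any 5-vertex graph whose "non-adjacency" relation
connects all vertices and whose ordered edge count differs from 10 (that of `C₅ᶜ`)
does not embed into `(nC5 n)ᶜ`. -/
lemma no_embed {n : ℕ} (H : SimpleGraph (Fin 5)) [DecidableRel H.Adj]
    (hcard : (Finset.univ.filter (fun p : Fin 5 × Fin 5 => H.Adj p.1 p.2)).card ≠ 10)
    (hconn : ∀ {α : Type} (φ : Fin 5 → α),
      (∀ i j, ¬H.Adj i j → φ i = φ j) → ∀ i j, φ i = φ j) :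
    IsEmpty (H ↪g (nC5 n)ᶜ) := by
  constructor
  intro f
  have hfst : ∀ i j, (f i).1 = (f j).1 := by
    refine hconn (fun i => (f i).1) ?_
    intro i j hna
    by_contra hne
    exact hna (f.map_adj_iff.mp (adj_ne_fst hne))
  set g : Fin 5 → Fin 5 := fun i => (f i).2 with hg
  have hinj : Function.Injective g := by
    intro i j h
    exact f.injective (Prod.ext (hfst i j) h)
  have hsurj : Function.Surjective g := (Finite.injective_iff_surjective.mp hinj)
  have hiff : ∀ i j, H.Adj i j ↔ (g i ≠ g j ∧ ¬(SimpleGraph.cycleGraph 5).Adj (g i) (g j)) := by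
    intro i j
    rw [← f.map_adj_iff, nC5_compl_adj]
    constructor
    · rintro ⟨hne, hnadj⟩
      exact ⟨fun h => hne (Prod.ext (hfst i j) h), fun hc => hnadj ⟨hfst i j, hc⟩⟩
    · rintro ⟨hgne, hnc⟩
      exact ⟨fun he => hgne (congrArg Prod.snd he), fun hc => hnc hc.2⟩
  have hsurjOn : Set.SurjOn (fun p : Fin 5 × Fin 5 => (g p.1, g p.2))
      ↑(Finset.univ.filter (fun p : Fin 5 × Fin 5 => H.Adj p.1 p.2))
      ↑(Finset.univ.filter (fun p : Fin 5 × Fin 5 =>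
          p.1 ≠ p.2 ∧ ¬(SimpleGraph.cycleGraph 5).Adj p.1 p.2)) := by
    rintro ⟨a, b⟩ hab
    simp only [Finset.coe_filter, Set.mem_setOf_eq, Finset.mem_univ, true_and] at hab
    obtain ⟨i, rfl⟩ := hsurj a
    obtain ⟨j, rfl⟩ := hsurj b
    refine ⟨(i, j), ?_, rfl⟩
    simp only [Finset.coe_filter, Set.mem_setOf_eq, Finset.mem_univ, true_and]
    exact (hiff i j).mpr hab
  have hle := Finset.card_le_card_of_surjOn _ hsurjOn
  have hle2 : (Finset.univ.filter (fun p : Fin 5 × Fin 5 => H.Adj p.1 p.2)).card ≤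
      (Finset.univ.filter (fun p : Fin 5 × Fin 5 =>
        p.1 ≠ p.2 ∧ ¬(SimpleGraph.cycleGraph 5).Adj p.1 p.2)).card := by
    refine Finset.card_le_card_of_injOn (fun p => (g p.1, g p.2)) ?_ ?_
    · intro p hp
      simp only [Finset.mem_coe, Finset.mem_filter, Finset.mem_univ, true_and] at hp ⊢
      exact (hiff p.1 p.2).mp hp
    · rintro ⟨i, j⟩ _ ⟨i', j'⟩ _ h
      simp only [Prod.mk.injEq] at h ⊢
      exact ⟨hinj h.1, hinj h.2⟩
  have h10 : (Finset.univ.filter (fun p : Fin 5 × Fin 5 =>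
      p.1 ≠ p.2 ∧ ¬(SimpleGraph.cycleGraph 5).Adj p.1 p.2)).card = 10 := by decide
  omega

lemma cyc_indep : ∀ a b c : Fin 5, a ≠ b → a ≠ c → b ≠ c →
    ((SimpleGraph.cycleGraph 5).Adj a b ∨ (SimpleGraph.cycleGraph 5).Adj a c ∨
      (SimpleGraph.cycleGraph 5).Adj b c) := by decide

lemma no_two_coloring : ¬∃ h : Fin 5 → Bool, ∀ v w : Fin 5, v ≠ w →
    ¬(SimpleGraph.cycleGraph 5).Adj v w → h v ≠ h w := by decide

/-- For every `n ≥ 1`, the complement of `n·C_5` has clique number `2n`, chromatic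
number `3n`, and is (P_5, kite)-free; so there are (P_5, kite)-free graphs `G` with
`χ(G) = ⌊3ω(G)/2⌋` for every even clique number. -/
theorem stmt17 (n : ℕ) (hn : 1 ≤ n) :
    ((nC5 n)ᶜ).cliqueNum = 2 * n ∧
    ((nC5 n)ᶜ).chromaticNumber = (3 * n : ℕ) ∧
    IsEmpty (SimpleGraph.pathGraph 5 ↪g (nC5 n)ᶜ) ∧
    IsEmpty (kite ↪g (nC5 n)ᶜ) := by
  refine ⟨?_, ?_, ?_, ?_⟩
  · -- clique number
    refine le_antisymm ?_ ?_
    · obtain ⟨t, ht⟩ := ((nC5 n)ᶜ).exists_isNClique_cliqueNum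
      rw [← ht.2]
      have hfib : ∀ k ∈ (Finset.univ : Finset (Fin n)),
          (t.filter (fun x => x.1 = k)).card ≤ 2 := by
        intro k _
        by_contra hgt
        push_neg at hgt
        obtain ⟨a, ha, b, hb, c, hc, hab, hac, hbc⟩ := Finset.two_lt_card.mp hgt
        simp only [Finset.mem_filter] at ha hb hc
        have hadj_ab := ht.1 ha.1 hb.1 hab
        have hadj_ac := ht.1 ha.1 hc.1 hac
        have hadj_bc := ht.1 hb.1 hc.1 hbc
        have h2ab : a.2 ≠ b.2 := fun h => hab (Prod.ext (ha.2.trans hb.2.symm) h)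
        have h2ac : a.2 ≠ c.2 := fun h => hac (Prod.ext (ha.2.trans hc.2.symm) h)
        have h2bc : b.2 ≠ c.2 := fun h => hbc (Prod.ext (hb.2.trans hc.2.symm) h)
        rcases cyc_indep a.2 b.2 c.2 h2ab h2ac h2bc with h | h | h
        · exact hadj_ab.2 ⟨ha.2.trans hb.2.symm, h⟩
        · exact hadj_ac.2 ⟨ha.2.trans hc.2.symm, h⟩
        · exact hadj_bc.2 ⟨hb.2.trans hc.2.symm, h⟩
      calc t.card = ∑ k : Fin n, (t.filter (fun x => x.1 = k)).card :=
            Finset.card_eq_sum_card_fiberwise (fun x _ => Finset.mem_univ x.1)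
        _ ≤ ∑ _k : Fin n, 2 := Finset.sum_le_sum hfib
        _ = 2 * n := by simp [mul_comm]
    · have hclique : ((nC5 n)ᶜ).IsClique
          ↑((Finset.univ : Finset (Fin n)) ×ˢ ({0, 2} : Finset (Fin 5))) := by
        intro x hx y hy hxy
        simp only [Finset.coe_product, Set.mem_prod, Finset.mem_coe, Finset.mem_insert,
          Finset.mem_singleton] at hx hy
        rcases eq_or_ne x.1 y.1 with h1 | h1
        · have h2 : x.2 ≠ y.2 := fun h => hxy (Prod.ext h1 h)
          refine ⟨hxy, fun hc => ?_⟩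
          have hcyc := hc.2
          rcases hx.2 with hx2 | hx2 <;> rcases hy.2 with hy2 | hy2 <;>
            rw [hx2, hy2] at hcyc h2 <;>
            first | exact h2 rfl | exact absurd hcyc (by decide)
        · exact adj_ne_fst h1
      have := SimpleGraph.IsClique.card_le_cliqueNum (tc := hclique)
      simpa [mul_comm] using this
  · -- chromatic number
    have hcmap : ∀ a b : Fin 5, a ≠ b → ¬(SimpleGraph.cycleGraph 5).Adj a b →
        (![0,0,1,1,2] : Fin 5 → Fin 3) a ≠ ![0,0,1,1,2] b := by decide
    have col : ((nC5 n)ᶜ).Colorable (3 * n) := by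
      refine ⟨SimpleGraph.Coloring.mk
        (fun x => ⟨3 * x.1.val + ((![0,0,1,1,2] : Fin 5 → Fin 3) x.2).val, by
          have h1 := x.1.isLt
          have h2 := ((![0,0,1,1,2] : Fin 5 → Fin 3) x.2).isLt
          omega⟩) ?_⟩
      intro x y hadj
      simp only [Ne, Fin.mk.injEq]
      rcases eq_or_ne x.1 y.1 with h1 | h1
      · have hsnd : x.2 ≠ y.2 := fun h => hadj.1 (Prod.ext h1 h)
        have hncyc : ¬(SimpleGraph.cycleGraph 5).Adj x.2 y.2 := fun hc => hadj.2 ⟨h1, hc⟩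
        have hne := hcmap _ _ hsnd hncyc
        have hval : ((![0,0,1,1,2] : Fin 5 → Fin 3) x.2).val ≠
            ((![0,0,1,1,2] : Fin 5 → Fin 3) y.2).val := fun h => hne (Fin.ext h)
        have h1' : x.1.val = y.1.val := congrArg Fin.val h1
        omega
      · have h1' : x.1.val ≠ y.1.val := fun h => h1 (Fin.ext h)
        have h2 := ((![0,0,1,1,2] : Fin 5 → Fin 3) x.2).isLt
        have h3 := ((![0,0,1,1,2] : Fin 5 → Fin 3) y.2).isLt
        omega
    have hlower : ∀ m : ℕ, ((nC5 n)ᶜ).Colorable m → 3 * n ≤ m := by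
      rintro m ⟨C⟩
      classical
      set T : Fin n → Finset (Fin m) :=
        fun k => Finset.univ.image (fun v : Fin 5 => C (k, v)) with hT
      have h3 : ∀ k, 3 ≤ (T k).card := by
        intro k
        by_contra h
        push_neg at h
        have hcard2 : (T k).card ≤ 2 := by omega
        have hab : C (k, 0) ≠ C (k, 2) := C.valid (adj_same (by decide) (by decide))
        have hsub : ({C (k, 0), C (k, 2)} : Finset (Fin m)) ⊆ T k := by
          intro x hx
          simp only [Finset.mem_insert, Finset.mem_singleton] at hx
          rcases hx with rfl | rfl <;>
            exact Finset.mem_image.mpr ⟨_, Finset.mem_univ _, rfl⟩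
        have hcard_ab : ({C (k, 0), C (k, 2)} : Finset (Fin m)).card = 2 := by
          rw [Finset.card_insert_of_notMem (by simpa using hab), Finset.card_singleton]
        have heq : ({C (k, 0), C (k, 2)} : Finset (Fin m)) = T k :=
          Finset.eq_of_subset_of_card_le hsub (by omega)
        have hmem : ∀ v : Fin 5, C (k, v) = C (k, 0) ∨ C (k, v) = C (k, 2) := by
          intro v
          have : C (k, v) ∈ T k := Finset.mem_image.mpr ⟨_, Finset.mem_univ _, rfl⟩
          rw [← heq] at this
          simpa using this
        refine no_two_coloring ⟨fun v => decide (C (k, v) = C (k, 0)), ?_⟩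
        intro v w hvw hncyc
        have hCvw : C (k, v) ≠ C (k, w) := C.valid (adj_same hvw hncyc)
        simp only [Ne, decide_eq_decide]
        intro hiff
        by_cases hv : C (k, v) = C (k, 0)
        · exact hCvw (hv.trans (hiff.mp hv).symm)
        · have hv2 := (hmem v).resolve_left hv
          have hw2 := (hmem w).resolve_left (fun h => hv (hiff.mpr h))
          exact hCvw (hv2.trans hw2.symm)
      have hdisj : ∀ k ∈ (Finset.univ : Finset (Fin n)),
          ∀ k' ∈ (Finset.univ : Finset (Fin n)), k ≠ k' → Disjoint (T k) (T k') := by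
        intro k _ k' _ hkk'
        rw [Finset.disjoint_left]
        rintro x hx hx'
        obtain ⟨v, _, rfl⟩ := Finset.mem_image.mp hx
        obtain ⟨w, _, hw⟩ := Finset.mem_image.mp hx'
        exact C.valid (adj_ne_fst (show ((k', w) : Fin n × Fin 5).1 ≠ (k, v).1 from hkk'.symm)) hw
      calc 3 * n = ∑ _k : Fin n, 3 := by simp [mul_comm]
        _ ≤ ∑ k : Fin n, (T k).card := Finset.sum_le_sum (fun k _ => h3 k)
        _ = (Finset.univ.biUnion T).card := (Finset.card_biUnion hdisj).symm
        _ ≤ Fintype.card (Fin m) := Finset.card_le_univ _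
        _ = m := Fintype.card_fin m
    refine le_antisymm col.chromaticNumber_le ?_
    rw [col.chromaticNumber_eq_sInf]
    exact_mod_cast Nat.cast_le.mpr (le_csInf ⟨3 * n, by exact col⟩ (fun b hb => hlower b hb))
  · -- P5-free
    refine no_embed _ (by decide) ?_
    intro α φ h
    have e02 := h 0 2 (by decide)
    have e03 := h 0 3 (by decide)
    have e04 := h 0 4 (by decide)
    have e13 := h 1 3 (by decide)
    have hall : ∀ i, φ i = φ 0 := by
      intro i
      fin_cases i
      · rfl
      · exact (e13.trans e03.symm)
      · exact e02.symm
      · exact e03.symm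
      · exact e04.symm
    intro i j; rw [hall i, hall j]
  · -- kite-free
    refine no_embed _ (by decide) ?_
    intro α φ h
    have e02 := h 0 2 (by decide)
    have e03 := h 0 3 (by decide)
    have e13 := h 1 3 (by decide)
    have e34 := h 3 4 (by decide)
    have hall : ∀ i, φ i = φ 0 := by
      intro i
      fin_cases i
      · rfl
      · exact (e13.trans e03.symm)
      · exact e02.symm
      · exact e03.symm
      · exact (e34.symm.trans e03.symm)
    intro i j; rw [hall i, hall j]
end

section
/- Let G be a 2K_2-free graph with the 5-cycle blow-up structure A_1,...,A_5 and sets B_i as above (B_i vertices have a neighbor in each of A_i, A_{i-2}, A_{i+2}, are anticomplete to A_{i-1} ∪ A_{i+1}, and are complete to A_i). Then every vertex of B_i is complete to A_{i+2} or complete to A_{i-2}. -/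
open SimpleGraph

/-- In a 2K_2-free graph with a 5-cycle blow-up structure `A 0, …, A 4` (each `A i`
complete to `A (i±1)`, anticomplete to `A (i±2)`, with `v i ∈ A i`), every vertex `b`
outside `A` that is complete to `A i`, has a neighbor in each of `A (i+2)` and
`A (i-2)`, and is anticomplete to `A (i+1) ∪ A (i-1)`, is complete to `A (i+2)` or
complete to `A (i-2)`. -/
theorem stmt19 {V : Type*} (G : SimpleGraph V)
    (h2K2 : IsEmpty (twoK2 ↪g G))
    (A : Fin 5 → Set V) (v : Fin 5 → V) (hv : ∀ i, v i ∈ A i)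
    (hcomp : ∀ i : Fin 5, ∀ a ∈ A i, ∀ b ∈ A (i + 1), G.Adj a b)
    (hanti : ∀ i : Fin 5, ∀ a ∈ A i, ∀ b ∈ A (i + 2), ¬ G.Adj a b)
    (i : Fin 5) (b : V) (hb : ∀ j, b ∉ A j)
    (hbi : ∀ a ∈ A i, G.Adj b a)
    (hbp : ∃ a ∈ A (i + 2), G.Adj b a)
    (hbm : ∃ a ∈ A (i - 2), G.Adj b a)
    (hbanti : ∀ a, a ∈ A (i + 1) ∪ A (i - 1) → ¬ G.Adj b a) :
    (∀ a ∈ A (i + 2), G.Adj b a) ∨ (∀ a ∈ A (i - 2), G.Adj b a) := by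
  by_contra hcon
  push_neg at hcon
  obtain ⟨⟨a, ha, hba⟩, a', ha', hba'⟩ := hcon
  have h21 : (2 : Fin 5) + 1 = -2 := by decide
  have e1 : i + 2 + 1 = i - 2 := by rw [add_assoc, h21, sub_eq_add_neg]
  have e2 : i - 2 + 2 = i := by rw [sub_add_cancel]
  have hbv : G.Adj b (v i) := hbi (v i) (hv i)
  have haa' : G.Adj a a' := hcomp (i + 2) a ha a' (by rw [e1]; exact ha')
  have hva : ¬ G.Adj (v i) a := hanti i (v i) (hv i) a ha
  have hva' : ¬ G.Adj (v i) a' := fun h =>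
    hanti (i - 2) a' ha' (v i) (by rw [e2]; exact hv i) h.symm
  have hbva : b ≠ v i := fun h => hb i (h ▸ hv i)
  have hbna : b ≠ a := fun h => hb (i + 2) (h ▸ ha)
  have hbna' : b ≠ a' := fun h => hb (i - 2) (h ▸ ha')
  have hvna : v i ≠ a := fun h => hba (h ▸ hbv)
  have hvna' : v i ≠ a' := fun h => hba' (h ▸ hbv)
  have hana' : a ≠ a' := haa'.ne
  refine h2K2.false ⟨⟨![b, v i, a, a'], ?_⟩, ?_⟩
  · intro x y
    fin_cases x <;> fin_cases y <;>
      simp_all [eq_comm, Ne.symm hbva, Ne.symm hbna, Ne.symm hbna',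
        Ne.symm hvna, Ne.symm hvna', Ne.symm hana']
  · intro x y
    fin_cases x <;> fin_cases y <;>
      first
        | exact iff_of_true hbv (by simp [twoK2])
        | exact iff_of_true hbv.symm (by simp [twoK2])
        | exact iff_of_true haa' (by simp [twoK2])
        | exact iff_of_true haa'.symm (by simp [twoK2])
        | exact iff_of_false (G.irrefl) (by simp)
        | exact iff_of_false hba (by simp [twoK2, Sym2.eq_iff] <;> decide)
        | exact iff_of_false (fun h => hba h.symm) (by simp [twoK2, Sym2.eq_iff] <;> decide)
        | exact iff_of_false hba' (by simp [twoK2, Sym2.eq_iff] <;> decide)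
        | exact iff_of_false (fun h => hba' h.symm) (by simp [twoK2, Sym2.eq_iff] <;> decide)
        | exact iff_of_false hva (by simp [twoK2, Sym2.eq_iff] <;> decide)
        | exact iff_of_false (fun h => hva h.symm) (by simp [twoK2, Sym2.eq_iff] <;> decide)
        | exact iff_of_false hva' (by simp [twoK2, Sym2.eq_iff] <;> decide)
        | exact iff_of_false (fun h => hva' h.symm) (by simp [twoK2, Sym2.eq_iff] <;> decide)
end
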